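/- Under the hypotheses of the extension construction with local integrators of dimensions n_i satisfying the lower bound (n_i ≥ n − min rank of the fixed-mode pencil), and with a weakly connected neighbor graph, the extended system {Ā, B̄_i, C̄_i; m} has no fixed spectrum if and only if N_{m−s} ∩ s ≠ ∅ for every subset s ⊂ {1,...,m} satisfying rank [λI_n − A, B_s; C_{m−s}, 0] < n for some λ ∈ σ(A). -/

import Mathlib

open Matrix Complex

noncomputable section

variable {n m : ℕ}

/-- Fixed-mode pencil `[λI − A, B_s; C_{m−s}, 0]` of the original system, in a
rank-equivalent form: the columns of `B_i` for `i ∉ s` and the rows of `C_i`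
for `i ∈ s` are set to zero (zero columns/rows do not affect the rank). -/
def pencil (p q : Fin m → ℕ)
    (A : Matrix (Fin n) (Fin n) ℝ)
    (B : ∀ i, Matrix (Fin n) (Fin (p i)) ℝ)
    (C : ∀ i, Matrix (Fin (q i)) (Fin n) ℝ)
    (lam : ℂ) (s : Finset (Fin m)) :
    Matrix (Fin n ⊕ Σ i, Fin (q i)) (Fin n ⊕ Σ i, Fin (p i)) ℂ :=
  fromBlocks (lam • 1 - A.map ofReal)
    (fun r c => if c.1 ∈ s then ofReal ((B c.1) r c.2) else 0)
    (fun r c => if r.1 ∈ s then 0 else ofReal ((C r.1) r.2 c))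
    0

/-- The block column `E_i` selecting the `i`-th integrator block. -/
def Eblk (nd : Fin m → ℕ) (i : Fin m) :
    Matrix (Σ j, Fin (nd j)) (Fin (nd i)) ℂ :=
  fun r c => if h : r.1 = i then (if h ▸ r.2 = c then 1 else 0) else 0

/-- The selector `E_t` (as a square matrix with identity blocks on positions in
`t` and zeros elsewhere; its rank is `Σ_{i ∈ t} n_i`). -/
def Esel (nd : Fin m → ℕ) (t : Finset (Fin m)) :
    Matrix (Σ j, Fin (nd j)) (Σ j, Fin (nd j)) ℂ :=
  fun r c => if r = c ∧ r.1 ∈ t then 1 else 0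

/-- `Ā = diag(A, 0)` of the extended system. -/
def Abar (nd : Fin m → ℕ) (A : Matrix (Fin n) (Fin n) ℝ) :
    Matrix (Fin n ⊕ Σ j, Fin (nd j)) (Fin n ⊕ Σ j, Fin (nd j)) ℂ :=
  fromBlocks (A.map ofReal) 0 0 0

/-- `B̄_i = diag(B_i, E_i)`. -/
def Bbar (p nd : Fin m → ℕ) (B : ∀ i, Matrix (Fin n) (Fin (p i)) ℝ) (i : Fin m) :
    Matrix (Fin n ⊕ Σ j, Fin (nd j)) (Fin (p i) ⊕ Fin (nd i)) ℂ :=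
  fromBlocks ((B i).map ofReal) 0 0 (Eblk nd i)

/-- `C̄_i = diag(C_i, E_{N_i}')`. -/
def Cbar (q nd : Fin m → ℕ) (C : ∀ i, Matrix (Fin (q i)) (Fin n) ℝ)
    (N : Fin m → Finset (Fin m)) (i : Fin m) :
    Matrix (Fin (q i) ⊕ Σ j, Fin (nd j)) (Fin n ⊕ Σ j, Fin (nd j)) ℂ :=
  fromBlocks ((C i).map ofReal) 0 0 (Esel nd (N i))

/-- Fixed-mode pencil of the extended system (same zeroing convention for the
channel subset `s`). -/
def extPencil (p q nd : Fin m → ℕ)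
    (A : Matrix (Fin n) (Fin n) ℝ)
    (B : ∀ i, Matrix (Fin n) (Fin (p i)) ℝ)
    (C : ∀ i, Matrix (Fin (q i)) (Fin n) ℝ)
    (N : Fin m → Finset (Fin m))
    (lam : ℂ) (s : Finset (Fin m)) :
    Matrix ((Fin n ⊕ Σ j, Fin (nd j)) ⊕ Σ i, (Fin (q i) ⊕ Σ j, Fin (nd j)))
      ((Fin n ⊕ Σ j, Fin (nd j)) ⊕ Σ i, (Fin (p i) ⊕ Fin (nd i))) ℂ :=
  fromBlocks (lam • 1 - Abar nd A)
    (fun r c => if c.1 ∈ s then Bbar p nd B c.1 r c.2 else 0)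
    (fun r c => if r.1 ∈ s then 0 else Cbar q nd C N r.1 r.2 c)
    0

end

set_option linter.unusedSectionVars false
set_option maxHeartbeats 1000000

noncomputable section StmtAuxSec

namespace StmtAux

variable {n m : ℕ}

lemma Eblk_apply (nd : Fin m → ℕ) (i : Fin m) (r : Σ j, Fin (nd j)) (c : Fin (nd i)) :
    Eblk nd i r c = if r = (⟨i, c⟩ : Σ j, Fin (nd j)) then 1 else 0 := by
  rcases r with ⟨j, x⟩
  rcases eq_or_ne j i with rfl | h
  · simp [Eblk, Sigma.ext_iff]
  · simp [Eblk, h, Sigma.ext_iff]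


/-! ### generic rank helpers -/

section Helpers

variable {α β α' β' : Type*} [Fintype α] [Fintype β] [Fintype α'] [Fintype β']
  [DecidableEq α] [DecidableEq β] [DecidableEq α'] [DecidableEq β']

lemma rank_submatrix_le_gen (A : Matrix α β ℂ) (f : α' → α) (g : β' → β) :
    (A.submatrix f g).rank ≤ A.rank := by
  have hfac : A.submatrix f g =
      (Matrix.of fun (i : α') (k : α) => if f i = k then (1 : ℂ) else 0) * A *
      (Matrix.of fun (k : β) (j : β') => if k = g j then (1 : ℂ) else 0) := by
    ext i j
    simp [Matrix.mul_apply, ite_mul, mul_ite, Finset.sum_ite_eq, Finset.sum_ite_eq']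
  rw [hfac]
  exact le_trans (Matrix.rank_mul_le_left _ _) (Matrix.rank_mul_le_right _ _)

lemma rank_reindex_gen (A : Matrix α β ℂ) (e : α' ≃ α) (f : β' ≃ β) :
    (A.submatrix e f).rank = A.rank := by
  refine le_antisymm (rank_submatrix_le_gen A e f) ?_
  have h := rank_submatrix_le_gen (A.submatrix e f) e.symm f.symm
  have h2 : (A.submatrix e f).submatrix e.symm f.symm = A := by
    ext i j; simp
  rwa [h2] at h

lemma range_prodMap' {M M' N N' : Type*} [AddCommGroup M] [AddCommGroup M']
    [AddCommGroup N] [AddCommGroup N'] [Module ℂ M] [Module ℂ M'] [Module ℂ N] [Module ℂ N']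
    (f : M →ₗ[ℂ] N) (g : M' →ₗ[ℂ] N') :
    LinearMap.range (f.prodMap g) = (LinearMap.range f).prod (LinearMap.range g) := by
  ext ⟨x, y⟩
  constructor
  · rintro ⟨⟨a, b⟩, h⟩
    rw [LinearMap.prodMap_apply] at h
    exact ⟨⟨a, (Prod.ext_iff.mp h).1⟩, ⟨b, (Prod.ext_iff.mp h).2⟩⟩
  · rintro ⟨⟨a, ha⟩, ⟨b, hb⟩⟩
    exact ⟨(a, b), Prod.ext ha hb⟩

def submoduleProdEquiv {M M' : Type*} [AddCommGroup M] [AddCommGroup M']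
    [Module ℂ M] [Module ℂ M'] (p : Submodule ℂ M) (r : Submodule ℂ M') :
    (p.prod r) ≃ₗ[ℂ] p × r where
  toFun x := (⟨x.1.1, x.2.1⟩, ⟨x.1.2, x.2.2⟩)
  invFun x := ⟨(x.1.1, x.2.1), ⟨x.1.2, x.2.2⟩⟩
  map_add' _ _ := rfl
  map_smul' _ _ := rfl
  left_inv _ := rfl
  right_inv _ := rfl

lemma finrank_submodule_prod {M M' : Type*} [AddCommGroup M] [AddCommGroup M']
    [Module ℂ M] [Module ℂ M'] [FiniteDimensional ℂ M] [FiniteDimensional ℂ M']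
    (p : Submodule ℂ M) (r : Submodule ℂ M') :
    Module.finrank ℂ (p.prod r) = Module.finrank ℂ p + Module.finrank ℂ r := by
  rw [LinearEquiv.finrank_eq (submoduleProdEquiv p r), Module.finrank_prod]

lemma rank_fromBlocks_diag (A : Matrix α β ℂ) (D : Matrix α' β' ℂ) :
    (fromBlocks A 0 0 D).rank = A.rank + D.rank := by
  classical
  set e₁ := LinearEquiv.sumArrowLequivProdArrow α α' ℂ ℂ
  set e₂ := LinearEquiv.sumArrowLequivProdArrow β β' ℂ ℂ
  have key : (fromBlocks A 0 0 D).mulVecLin =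
      e₁.symm.toLinearMap ∘ₗ ((A.mulVecLin.prodMap D.mulVecLin) ∘ₗ e₂.toLinearMap) := by
    apply LinearMap.ext; intro x
    ext i
    cases i <;>
      simp [e₁, e₂, Matrix.fromBlocks_mulVec, LinearEquiv.sumArrowLequivProdArrow,
        Equiv.sumArrowEquivProdArrow]
  rw [Matrix.rank, key, LinearMap.range_comp,
    LinearMap.range_comp_of_range_eq_top _ (LinearEquiv.range e₂),
    LinearEquiv.finrank_map_eq, range_prodMap', finrank_submodule_prod, Matrix.rank, Matrix.rank]

end Helpers

/-! ### reorganization -/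

def reorg {α κ : Type*} {β γ : Fin m → Type*} :
    ((α ⊕ κ) ⊕ Σ i, (β i ⊕ γ i)) ≃ ((α ⊕ Σ i, β i) ⊕ (κ ⊕ Σ i, γ i)) where
  toFun x :=
    match x with
    | Sum.inl (Sum.inl a) => Sum.inl (Sum.inl a)
    | Sum.inl (Sum.inr k) => Sum.inr (Sum.inl k)
    | Sum.inr ⟨i, Sum.inl b⟩ => Sum.inl (Sum.inr ⟨i, b⟩)
    | Sum.inr ⟨i, Sum.inr c⟩ => Sum.inr (Sum.inr ⟨i, c⟩)
  invFun x :=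
    match x with
    | Sum.inl (Sum.inl a) => Sum.inl (Sum.inl a)
    | Sum.inl (Sum.inr ⟨i, b⟩) => Sum.inr ⟨i, Sum.inl b⟩
    | Sum.inr (Sum.inl k) => Sum.inl (Sum.inr k)
    | Sum.inr (Sum.inr ⟨i, c⟩) => Sum.inr ⟨i, Sum.inr c⟩
  left_inv := by rintro ((a | k) | ⟨i, (b | c)⟩) <;> rfl
  right_inv := by rintro ((a | ⟨i, b⟩) | (k | ⟨i, c⟩)) <;> rfl

def Ymat (nd : Fin m → ℕ) (N : Fin m → Finset (Fin m)) (lam : ℂ) (s : Finset (Fin m)) :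
    Matrix ((Σ j, Fin (nd j)) ⊕ Σ _i : Fin m, (Σ j, Fin (nd j)))
      ((Σ j, Fin (nd j)) ⊕ Σ i, Fin (nd i)) ℂ :=
  fromBlocks (lam • 1)
    (fun r c => if c.1 ∈ s then Eblk nd c.1 r c.2 else 0)
    (fun r c => if r.1 ∈ s then 0 else Esel nd (N r.1) r.2 c)
    0

lemma extPencil_eq (p q nd : Fin m → ℕ)
    (A : Matrix (Fin n) (Fin n) ℝ)
    (B : ∀ i, Matrix (Fin n) (Fin (p i)) ℝ)
    (C : ∀ i, Matrix (Fin (q i)) (Fin n) ℝ)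
    (N : Fin m → Finset (Fin m)) (lam : ℂ) (s : Finset (Fin m)) :
    extPencil p q nd A B C N lam s =
      (fromBlocks (pencil p q A B C lam s) 0 0 (Ymat nd N lam s)).submatrix reorg reorg := by
  ext r c
  rcases r with (x | k) | ⟨i, x | k⟩ <;> rcases c with (y | k') | ⟨i', y | k'⟩ <;>
    simp [extPencil, pencil, Ymat, Abar, Bbar, Cbar, reorg, Matrix.one_apply,
      Matrix.submatrix_apply, Matrix.fromBlocks_apply₁₁, Matrix.fromBlocks_apply₁₂,
      Matrix.fromBlocks_apply₂₁, Matrix.fromBlocks_apply₂₂, Sum.inl.injEq, Sum.inr.injEq,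
        Matrix.fromBlocks, Matrix.of_apply, Sum.elim_inl, Sum.elim_inr] <;>
    split_ifs <;> simp_all

lemma rank_extPencil (p q nd : Fin m → ℕ)
    (A : Matrix (Fin n) (Fin n) ℝ)
    (B : ∀ i, Matrix (Fin n) (Fin (p i)) ℝ)
    (C : ∀ i, Matrix (Fin (q i)) (Fin n) ℝ)
    (N : Fin m → Finset (Fin m)) (lam : ℂ) (s : Finset (Fin m)) :
    (extPencil p q nd A B C N lam s).rank =
      (pencil p q A B C lam s).rank + (Ymat nd N lam s).rank := by
  rw [extPencil_eq, rank_reindex_gen, rank_fromBlocks_diag]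


lemma Ymat_rank_le (nd : Fin m → ℕ) (N : Fin m → Finset (Fin m)) (lam : ℂ)
    (s : Finset (Fin m)) (hT : ((sᶜ).biUnion N) ∩ s = ∅) :
    (Ymat nd N lam s).rank ≤ Fintype.card (Σ j, Fin (nd j)) := by
  classical
  have hTs : ∀ i j : Fin m, i ∉ s → j ∈ N i → j ∉ s := by
    intro i j hi hj hjs
    have hmem : j ∈ ((sᶜ).biUnion N) ∩ s :=
      Finset.mem_inter.mpr ⟨Finset.mem_biUnion.mpr ⟨i, Finset.mem_compl.mpr hi, hj⟩, hjs⟩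
    rw [hT] at hmem
    exact absurd hmem (Finset.notMem_empty j)
  let L : Matrix ((Σ j, Fin (nd j)) ⊕ Σ _i : Fin m, (Σ j, Fin (nd j))) (Σ j, Fin (nd j)) ℂ :=
    fun x k =>
      match x with
      | Sum.inl k' => if k' = k then (if k.1 ∈ s then 1 else lam) else 0
      | Sum.inr ⟨i, k'⟩ => if k' = k ∧ i ∉ s ∧ k.1 ∈ N i ∧ k.1 ∉ s then 1 else 0
  let Km : Matrix (Σ j, Fin (nd j)) ((Σ j, Fin (nd j)) ⊕ Σ i, Fin (nd i)) ℂ :=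
    fun k y =>
      match y with
      | Sum.inl k' => if k = k' then (if k.1 ∈ s then lam else 1) else 0
      | Sum.inr k' => if k = k' ∧ k.1 ∈ s then 1 else 0
  have hfac : Ymat nd N lam s = L * Km := by
    ext x y
    rcases x with k' | ⟨i, k'⟩ <;> rcases y with k | k
    · rw [Matrix.mul_apply, Finset.sum_eq_single k'
        (fun b _ hb => by simp [L, Ne.symm hb]) (fun h => absurd (Finset.mem_univ _) h)]
      simp only [fromBlocks, of_apply, Sum.elim_inl, Sum.elim_inr, Ymat, fromBlocks_apply₁₁, Matrix.smul_apply, Matrix.one_apply, L, Km, if_pos rfl]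
      rcases eq_or_ne k' k with rfl | h
      · simp; split_ifs <;> ring
      · simp [h]
    · rw [Matrix.mul_apply, Finset.sum_eq_single k'
        (fun b _ hb => by simp [L, Ne.symm hb]) (fun h => absurd (Finset.mem_univ _) h)]
      simp only [fromBlocks, of_apply, Sum.elim_inl, Sum.elim_inr, Ymat, fromBlocks_apply₁₂, L, Km, if_pos rfl]
      simp only [Eblk_apply]
      rcases eq_or_ne k' k with rfl | h
      · by_cases hj : k'.1 ∈ s <;> simp [hj, Sigma.eta]
      · simp [Sigma.eta, h]
    · rw [Matrix.mul_apply, Finset.sum_eq_single k'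
        (fun b _ hb => by simp [L, Ne.symm hb]) (fun h => absurd (Finset.mem_univ _) h)]
      simp only [fromBlocks, of_apply, Sum.elim_inl, Sum.elim_inr, Ymat, fromBlocks_apply₂₁, L, Km, Esel]
      by_cases his : i ∈ s
      · simp [his]
      · rcases eq_or_ne k' k with rfl | h
        · by_cases hN : k'.1 ∈ N i
          · have hks : k'.1 ∉ s := hTs i k'.1 his hN
            simp [his, hN, hks]
          · simp [his, hN]
        · simp [h, his]
    · rw [Matrix.mul_apply, Finset.sum_eq_single k'
        (fun b _ hb => by simp [L, Ne.symm hb]) (fun h => absurd (Finset.mem_univ _) h)]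
      simp only [fromBlocks, of_apply, Sum.elim_inl, Sum.elim_inr, Ymat, fromBlocks_apply₂₂, L, Km, Matrix.zero_apply]
      by_cases h : k' = k ∧ i ∉ s ∧ k.1 ∈ N i ∧ k.1 ∉ s
      · obtain ⟨rfl, hi, hN, hks⟩ := h
        simp [hks]
      · split_ifs <;> simp_all
  rw [hfac]
  exact le_trans (Matrix.rank_mul_le_left _ _) (Matrix.rank_le_card_width _)

lemma Esel_eq_diagonal (nd : Fin m → ℕ) (t : Finset (Fin m)) :
    Esel nd t = diagonal (fun k : Σ j, Fin (nd j) => if k.1 ∈ t then (1 : ℂ) else 0) := by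
  ext r c
  rcases eq_or_ne r c with rfl | h
  · simp [Esel, diagonal]
  · simp [Esel, diagonal_apply_ne _ h, h]

def subtypeSigmaEquivAux (nd : Fin m → ℕ) (t : Finset (Fin m)) :
    {k : Σ j, Fin (nd j) // k.1 ∈ t} ≃ Σ j : {j : Fin m // j ∈ t}, Fin (nd j.1) where
  toFun k := ⟨⟨k.1.1, k.2⟩, k.1.2⟩
  invFun x := ⟨⟨x.1.1, x.2⟩, x.1.2⟩
  left_inv := fun ⟨⟨_, _⟩, _⟩ => rfl
  right_inv := fun ⟨⟨_, _⟩, _⟩ => rfl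

lemma Esel_rank (nd : Fin m → ℕ) (t : Finset (Fin m)) :
    (Esel nd t).rank = ∑ j ∈ t, nd j := by
  classical
  rw [Esel_eq_diagonal, Matrix.rank_diagonal]
  have h1 : Fintype.card {k : Σ j, Fin (nd j) // (if k.1 ∈ t then (1 : ℂ) else 0) ≠ 0}
      = Fintype.card {k : Σ j, Fin (nd j) // k.1 ∈ t} := by
    apply Fintype.card_congr
    apply Equiv.subtypeEquivRight
    intro k
    split_ifs <;> simp_all
  rw [h1, Fintype.card_congr (subtypeSigmaEquivAux nd t), Fintype.card_sigma]
  simp [Finset.sum_attach t (fun j => nd j)]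


lemma Ymat_rank_ge (nd : Fin m → ℕ) (N : Fin m → Finset (Fin m)) (lam : ℂ)
    (s : Finset (Fin m)) (hself : ∀ i, i ∈ N i) :
    Fintype.card (Σ j, Fin (nd j)) + ∑ j ∈ ((sᶜ).biUnion N) ∩ s, nd j
      ≤ (Ymat nd N lam s).rank := by
  classical
  set T := ((sᶜ).biUnion N) ∩ s with hTdef
  have hTsub : T ⊆ s := fun j hj => (Finset.mem_inter.mp hj).2
  let w : Fin m → Fin m := fun j =>
    if h : ∃ i, i ∉ s ∧ j ∈ N i then h.choose else j
  have hw : ∀ j ∈ T, w j ∉ s ∧ j ∈ N (w j) := by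
    intro j hj
    obtain ⟨hj1, _⟩ := Finset.mem_inter.mp hj
    obtain ⟨i, hi, hji⟩ := Finset.mem_biUnion.mp hj1
    have hex : ∃ i, i ∉ s ∧ j ∈ N i := ⟨i, Finset.mem_compl.mp hi, hji⟩
    simpa [w, hex] using hex.choose_spec
  let U : Matrix ((Σ j, Fin (nd j)) ⊕ (Σ j, Fin (nd j)))
      ((Σ j, Fin (nd j)) ⊕ Σ _i : Fin m, (Σ j, Fin (nd j))) ℂ := fun x y =>
    match x, y with
    | Sum.inl k, Sum.inl k'' => if k.1 ∈ s ∧ k'' = k then 1 else 0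
    | Sum.inl k, Sum.inr z => if k.1 ∉ s ∧ z = ⟨k.1, k⟩ then 1 else 0
    | Sum.inr _, Sum.inl _ => 0
    | Sum.inr k, Sum.inr z => if k.1 ∈ T ∧ z = ⟨w k.1, k⟩ then 1 else 0
  let V : Matrix ((Σ j, Fin (nd j)) ⊕ Σ i, Fin (nd i))
      ((Σ j, Fin (nd j)) ⊕ (Σ j, Fin (nd j))) ℂ := fun y x =>
    match y, x with
    | Sum.inl k'', Sum.inl k => if k.1 ∉ s ∧ k'' = k then 1 else 0
    | Sum.inr k'', Sum.inl k => if k.1 ∈ s ∧ k'' = k then 1 else 0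
    | Sum.inl k'', Sum.inr k => if k.1 ∈ T ∧ k'' = k then 1 else 0
    | Sum.inr k'', Sum.inr k => if k.1 ∈ T ∧ k'' = k then -lam else 0
  let W : Matrix ((Σ j, Fin (nd j)) ⊕ Σ _i : Fin m, (Σ j, Fin (nd j)))
      ((Σ j, Fin (nd j)) ⊕ (Σ j, Fin (nd j))) ℂ := fun x y =>
    match x, y with
    | Sum.inl k', Sum.inl k => if k' = k then (if k.1 ∈ s then 1 else lam) else 0
    | Sum.inr ⟨i, k'⟩, Sum.inl k => if k.1 ∉ s ∧ i ∉ s ∧ k' = k ∧ k.1 ∈ N i then 1 else 0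
    | Sum.inl _, Sum.inr _ => 0
    | Sum.inr ⟨i, k'⟩, Sum.inr k => if k.1 ∈ T ∧ i ∉ s ∧ k' = k ∧ k.1 ∈ N i then 1 else 0
  have hYV : Ymat nd N lam s * V = W := by
    ext x y
    rw [Matrix.mul_apply, Fintype.sum_sum_type]
    rcases y with k | k
    · rw [Finset.sum_eq_single k (fun b _ hb => by simp [V, hb])
        (fun h => absurd (Finset.mem_univ _) h),
        Finset.sum_eq_single k (fun b _ hb => by simp [V, hb])
        (fun h => absurd (Finset.mem_univ _) h)]
      rcases x with k' | ⟨i, k'⟩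
      · simp only [fromBlocks, of_apply, Sum.elim_inl, Sum.elim_inr, Ymat, fromBlocks_apply₁₁, fromBlocks_apply₁₂, V, W,
          Matrix.smul_apply, Matrix.one_apply, Eblk_apply, Sigma.eta]
        rcases eq_or_ne k' k with rfl | h
        · by_cases hks : k'.1 ∈ s <;> simp [hks]
        · simp [h]
      · simp only [fromBlocks, of_apply, Sum.elim_inl, Sum.elim_inr, Ymat, fromBlocks_apply₂₁, fromBlocks_apply₂₂, V, W, Esel,
          Matrix.zero_apply]
        rcases eq_or_ne k' k with rfl | h
        · by_cases hks : k'.1 ∈ s <;> by_cases his : i ∈ s <;>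
            simp [hks, his, and_comm]
        · simp [h]
    · rw [Finset.sum_eq_single k (fun b _ hb => by simp [V, hb])
        (fun h => absurd (Finset.mem_univ _) h),
        Finset.sum_eq_single k (fun b _ hb => by simp [V, hb])
        (fun h => absurd (Finset.mem_univ _) h)]
      rcases x with k' | ⟨i, k'⟩
      · simp only [fromBlocks, of_apply, Sum.elim_inl, Sum.elim_inr, Ymat, fromBlocks_apply₁₁, fromBlocks_apply₁₂, V, W,
          Matrix.smul_apply, Matrix.one_apply, Eblk_apply, Sigma.eta]
        rcases eq_or_ne k' k with rfl | h
        · by_cases hkT : k'.1 ∈ T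
          · have hks : k'.1 ∈ s := hTsub hkT
            simp [hkT, hks]
          · simp [hkT]
        · simp [h]
      · simp only [fromBlocks, of_apply, Sum.elim_inl, Sum.elim_inr, Ymat, fromBlocks_apply₂₁, fromBlocks_apply₂₂, V, W, Esel,
          Matrix.zero_apply]
        rcases eq_or_ne k' k with rfl | h
        · by_cases hkT : k'.1 ∈ T <;> by_cases his : i ∈ s <;>
            simp [hkT, his, and_comm]
        · simp [h]
  have hUW : U * W = fromBlocks 1 0 0 (Esel nd T) := by
    ext x y
    rw [Matrix.mul_apply, Fintype.sum_sum_type]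
    rcases x with k | k
    · rw [Finset.sum_eq_single k (fun b _ hb => by simp [U, hb])
        (fun h => absurd (Finset.mem_univ _) h),
        Finset.sum_eq_single (⟨k.1, k⟩ : Σ _i : Fin m, (Σ j, Fin (nd j)))
        (fun b _ hb => by simp [U, hb]) (fun h => absurd (Finset.mem_univ _) h)]
      rcases y with k'' | k''
      · simp only [fromBlocks, of_apply, Sum.elim_inl, Sum.elim_inr, U, W, fromBlocks_apply₁₁, Matrix.one_apply]
        rcases eq_or_ne k k'' with rfl | h
        · by_cases hks : k.1 ∈ s <;> simp [hks, hself]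
        · by_cases hks : k.1 ∈ s <;> simp [hks, h, Ne.symm h]
      · simp only [fromBlocks, of_apply, Sum.elim_inl, Sum.elim_inr, U, W, fromBlocks_apply₁₂, Matrix.zero_apply]
        rcases eq_or_ne k k'' with rfl | h
        · by_cases hks : k.1 ∈ s
          · simp [hks]
          · by_cases hkT : k.1 ∈ T
            · exact absurd (hTsub hkT) hks
            · simp [hks, hkT]
        · by_cases hks : k.1 ∈ s <;> simp [hks, h, Ne.symm h]
    · rw [Finset.sum_eq_single k (fun b _ hb => by simp [U])
        (fun h => absurd (Finset.mem_univ _) h),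
        Finset.sum_eq_single (⟨w k.1, k⟩ : Σ _i : Fin m, (Σ j, Fin (nd j)))
        (fun b _ hb => by simp [U, hb]) (fun h => absurd (Finset.mem_univ _) h)]
      rcases y with k'' | k''
      · simp only [fromBlocks, of_apply, Sum.elim_inl, Sum.elim_inr, U, W, fromBlocks_apply₂₁, Matrix.zero_apply]
        rcases eq_or_ne k k'' with rfl | h
        · by_cases hkT : k.1 ∈ T
          · obtain ⟨hws, _⟩ := hw k.1 hkT
            simp [hkT, hws, hTsub hkT]
          · simp [hkT]
        · by_cases hkT : k.1 ∈ T <;> simp [hkT, h, Ne.symm h]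
      · simp only [fromBlocks, of_apply, Sum.elim_inl, Sum.elim_inr, U, W, fromBlocks_apply₂₂, Esel]
        rcases eq_or_ne k k'' with rfl | h
        · by_cases hkT : k.1 ∈ T
          · obtain ⟨hws, hwN⟩ := hw k.1 hkT
            simp [hkT, hws, hwN]
          · simp [hkT]
        · by_cases hkT : k.1 ∈ T <;> simp [hkT, h, Ne.symm h]
  have hrk : (fromBlocks (1 : Matrix (Σ j, Fin (nd j)) (Σ j, Fin (nd j)) ℂ) 0 0
      (Esel nd T)).rank = Fintype.card (Σ j, Fin (nd j)) + ∑ j ∈ T, nd j := by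
    rw [rank_fromBlocks_diag, Matrix.rank_one, Esel_rank]
  calc Fintype.card (Σ j, Fin (nd j)) + ∑ j ∈ T, nd j
      = (U * (Ymat nd N lam s * V)).rank := by rw [hYV, hUW, hrk]
    _ ≤ (Ymat nd N lam s * V).rank := Matrix.rank_mul_le_right _ _
    _ ≤ (Ymat nd N lam s).rank := Matrix.rank_mul_le_left _ _

lemma pencil_rank_spec (p q : Fin m → ℕ)
    (A : Matrix (Fin n) (Fin n) ℝ)
    (B : ∀ i, Matrix (Fin n) (Fin (p i)) ℝ)
    (C : ∀ i, Matrix (Fin (q i)) (Fin n) ℝ)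
    (lam : ℂ) (s : Finset (Fin m))
    (h : (pencil p q A B C lam s).rank < n) :
    lam ∈ spectrum ℂ (A.map Complex.ofReal) := by
  by_contra hs
  rw [spectrum.notMem_iff] at hs
  have halg : (algebraMap ℂ (Matrix (Fin n) (Fin n) ℂ)) lam - A.map ofReal
      = lam • 1 - A.map ofReal := by
    rw [Algebra.algebraMap_eq_smul_one]
  rw [halg] at hs
  have hr : (lam • 1 - A.map ofReal : Matrix (Fin n) (Fin n) ℂ).rank = n := by
    rw [Matrix.rank_of_isUnit _ hs, Fintype.card_fin]
  have hsub : (pencil p q A B C lam s).submatrix Sum.inl Sum.inl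
      = lam • 1 - A.map ofReal := rfl
  have hle := rank_submatrix_le_gen (pencil p q A B C lam s) Sum.inl Sum.inl
  rw [hsub, hr] at hle
  omega


end StmtAux

end StmtAuxSec

/-- For a jointly controllable, jointly observable system with a weakly
connected neighbor graph and local integrators of dimensions satisfying the
lower bound, the extended system has no fixed spectrum if and only if
`N_{m−s} ∩ s ≠ ∅` for every subset `s` at which the fixed-mode pencil of the
original system is rank deficient for some `λ ∈ σ(A)`. -/
theorem stmt11 {n m : ℕ} (p q nd : Fin m → ℕ)
    (A : Matrix (Fin n) (Fin n) ℝ)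
    (B : ∀ i, Matrix (Fin n) (Fin (p i)) ℝ)
    (C : ∀ i, Matrix (Fin (q i)) (Fin n) ℝ)
    (N : Fin m → Finset (Fin m))
    (hself : ∀ i, i ∈ N i)
    -- weakly connected neighbor graph
    (hwc : ∀ i j, Relation.ReflTransGen (fun a b => a ∈ N b ∨ b ∈ N a) i j)
    -- joint controllability: rank [λI − A, B] = n for all λ
    (hctrb : ∀ lam : ℂ, (pencil p q A B C lam Finset.univ).rank = n)
    -- joint observability: rank [λI − A; C] = n for all λ
    (hobs : ∀ lam : ℂ, (pencil p q A B C lam ∅).rank = n)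
    -- n_i ≥ n − min_{s, λ ∈ σ(A)} rank [λI − A, B_s; C_{m−s}, 0]
    (hbound : ∀ i, ∀ (s : Finset (Fin m)) (lam : ℂ),
      lam ∈ spectrum ℂ (A.map Complex.ofReal) →
      n - (pencil p q A B C lam s).rank ≤ nd i) :
    (∀ (lam : ℂ) (s : Finset (Fin m)),
        n + ∑ i, nd i ≤ (extPencil p q nd A B C N lam s).rank) ↔
      ∀ s : Finset (Fin m),
        (∃ lam ∈ spectrum ℂ (A.map Complex.ofReal),
          (pencil p q A B C lam s).rank < n) →
        (((sᶜ).biUnion N) ∩ s).Nonempty := by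
  classical
  constructor
  · intro hL s hex
    obtain ⟨lam, hspec, hlt⟩ := hex
    by_contra hne
    rw [Finset.not_nonempty_iff_eq_empty] at hne
    have h1 := hL lam s
    rw [StmtAux.rank_extPencil] at h1
    have h2 := StmtAux.Ymat_rank_le nd N lam s hne
    have hcard : Fintype.card (Σ j, Fin (nd j)) = ∑ i, nd i := by simp
    set r1 := (pencil p q A B C lam s).rank
    set r2 := (StmtAux.Ymat nd N lam s).rank
    omega
  · intro hR lam s
    rw [StmtAux.rank_extPencil]
    have h3 := StmtAux.Ymat_rank_ge nd N lam s hself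
    have hcard : Fintype.card (Σ j, Fin (nd j)) = ∑ i, nd i := by simp
    rcases le_or_gt n (pencil p q A B C lam s).rank with h | h
    · set r1 := (pencil p q A B C lam s).rank
      set r2 := (StmtAux.Ymat nd N lam s).rank
      set S1 := ∑ j ∈ ((sᶜ).biUnion N) ∩ s, nd j
      set t := ∑ i, nd i
      omega
    · have hspec := StmtAux.pencil_rank_spec p q A B C lam s h
      obtain ⟨j, hj⟩ := hR s ⟨lam, hspec, h⟩
      have hb := hbound j s lam hspec
      have hsum : nd j ≤ ∑ j' ∈ ((sᶜ).biUnion N) ∩ s, nd j' :=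
        Finset.single_le_sum (fun _ _ => Nat.zero_le _) hj
      set r1 := (pencil p q A B C lam s).rank
      set r2 := (StmtAux.Ymat nd N lam s).rank
      set S1 := ∑ j' ∈ ((sᶜ).biUnion N) ∩ s, nd j'
      set t := ∑ i, nd i
      set dj := nd j
      omega
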